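/- Let f ∈ L¹(ℝ^d), L = (L_1,…,L_d) ∈ ℝ_+^d and k ∈ ℕ_0^d. Then (∏_{h=1}^d L_h)^{−1} ∫_{ℝ^d} f(x) e_k(x) dx = (2^{d−1} ∏_{h=1}^d L_h)^{−1} Σ_{s ∈ {1}×{−1,1}^{d−1}} Re{ f̂( π (s k)/(2L) ) · exp( i (π/2) s·k ) }, where (s k / L)_h = s_h k_h / L_h and s·k = Σ_h s_h k_h. -/

import Mathlib

open MeasureTheory Filter Finset

noncomputable section

/-- Euclidean norm on `Fin d → ℝ`. -/
def euclNorm {d : ℕ} (x : Fin d → ℝ) : ℝ := Real.sqrt (∑ h, (x h) ^ 2)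

/-- Tensor cosine basis function `e_k` associated to the box `[-L, L]`. -/
def cosBasis {d : ℕ} (L : Fin d → ℝ) (k : Fin d → ℕ) (x : Fin d → ℝ) : ℝ :=
  ∏ h, Real.cos ((k h : ℝ) * Real.pi * (x h + L h) / (2 * L h))

/-- Weight `2^{-Λ(k)}` where `Λ(k)` is the number of zero components of `k`;
used in the primed sums `Σ'`. -/
def wt {d : ℕ} (k : Fin d → ℕ) : ℝ :=
  (1 / 2 : ℝ) ^ (Finset.univ.filter (fun h => k h = 0)).card

/-- Fourier transform `f̂(u) = ∫ f(x) e^{i u·x} dx`. -/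
def fourierT {d : ℕ} (f : (Fin d → ℝ) → ℝ) (u : Fin d → ℝ) : ℂ :=
  ∫ x : Fin d → ℝ, (f x : ℂ) * Complex.exp (Complex.I * (∑ h, (u h : ℂ) * (x h : ℂ)))

/-- The quantity `B_f(L)` from the definition of COS-admissibility. -/
def Bf {d : ℕ} (f : (Fin d → ℝ) → ℝ) (L : Fin d → ℝ) : ℝ :=
  ∑' k : Fin d → ℕ, wt k * (∏ h, L h)⁻¹ *
    (∫ x in (Set.Icc (-L) L)ᶜ, f x * cosBasis L k x) ^ 2

/-- COS-admissibility: `B_f(L) → 0` as `min_h L_h → ∞`, i.e. as all components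
of `L` tend to infinity. -/
def COSAdmissible {d : ℕ} (f : (Fin d → ℝ) → ℝ) : Prop :=
  Filter.Tendsto (fun L : Fin d → ℝ => Bf f L) Filter.atTop (nhds 0)

/-- Sign vectors `s ∈ {1} × {-1,1}^{d-1}`, encoded as boolean vectors whose first
component is `true`. -/
def signSet (d : ℕ) : Finset (Fin d → Bool) :=
  Finset.univ.filter fun σ => ∀ h : Fin d, (h : ℕ) = 0 → σ h = true

/-- The sign `±1` associated to a boolean. -/
def sgn {d : ℕ} (σ : Fin d → Bool) (h : Fin d) : ℝ := if σ h then 1 else -1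

/-- COS coefficients computed from a (possibly approximate) Fourier transform `ϑ`:
`c_k = (2^{d-1} ∏_h L_h)⁻¹ Σ_s Re{ ϑ(π s k/(2L)) exp(i (π/2) s·k) }`. -/
def cosCoef {d : ℕ} (ϑ : (Fin d → ℝ) → ℂ) (L : Fin d → ℝ) (k : Fin d → ℕ) : ℝ :=
  ((2 : ℝ) ^ (d - 1) * ∏ h, L h)⁻¹ *
    ∑ σ ∈ signSet d,
      (ϑ (fun h => Real.pi * (sgn σ h * (k h : ℝ)) / (2 * L h)) *
        Complex.exp (Complex.I * ((Real.pi : ℂ) / 2) *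
          ((∑ h, sgn σ h * (k h : ℝ) : ℝ) : ℂ))).re

/-- Classical Fourier-cosine coefficients `a_k` of `f·1_{[-L,L]}`. -/
def aCoef {d : ℕ} (f : (Fin d → ℝ) → ℝ) (L : Fin d → ℝ) (k : Fin d → ℕ) : ℝ :=
  (∏ h, L h)⁻¹ * ∫ x in Set.Icc (-L) L, f x * cosBasis L k x

/-- The constant `Ξ = (π²/3) Σ_{h=1}^d (π²/3 + 1)^{h-1}`. -/
def Xi (d : ℕ) : ℝ :=
  Real.pi ^ 2 / 3 * ∑ h ∈ Finset.range d, (Real.pi ^ 2 / 3 + 1) ^ h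

/-- A function decays exponentially if `|f(x)| ≤ C₁ e^{-C₂ |x|}` for `|x| > m`. -/
def DecaysExp {d : ℕ} (f : (Fin d → ℝ) → ℝ) : Prop :=
  ∃ C₁ C₂ m : ℝ, 0 < C₁ ∧ 0 < C₂ ∧ 0 < m ∧
    ∀ x, m < euclNorm x → |f x| ≤ C₁ * Real.exp (-C₂ * euclNorm x)

lemma prod_cos_full {d : ℕ} (θ : Fin d → ℝ) :
    (2:ℝ) ^ d * ∏ h, Real.cos (θ h) =
      ∑ σ : Fin d → Bool, Real.cos (∑ h, sgn σ h * θ h) := by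
  have key : (((2:ℝ) ^ d * ∏ h, Real.cos (θ h) : ℝ) : ℂ)
      = ∑ σ : Fin d → Bool, Complex.exp ((↑(∑ h, sgn σ h * θ h)) * Complex.I) := by
    calc (((2:ℝ) ^ d * ∏ h, Real.cos (θ h) : ℝ) : ℂ)
        = ∏ h : Fin d, (2 * Complex.cos (θ h)) := by
          rw [Complex.ofReal_mul, Complex.ofReal_prod, Finset.prod_mul_distrib,
            Finset.prod_const]
          simp [Complex.ofReal_cos]
      _ = ∏ h : Fin d, ∑ b : Bool,
            Complex.exp ((((if b then (1:ℝ) else -1) * θ h : ℝ)) * Complex.I) := by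
          refine Finset.prod_congr rfl fun h _ => ?_
          rw [Complex.cos]
          simp [Fintype.sum_bool]
          ring
      _ = ∑ σ : Fin d → Bool, ∏ h : Fin d,
            Complex.exp ((((if σ h then (1:ℝ) else -1) * θ h : ℝ)) * Complex.I) :=
          Fintype.prod_sum _
      _ = ∑ σ : Fin d → Bool, Complex.exp ((↑(∑ h, sgn σ h * θ h)) * Complex.I) := by
          refine Finset.sum_congr rfl fun σ _ => ?_
          rw [← Complex.exp_sum]
          congr 1
          rw [← Finset.sum_mul]
          push_cast [sgn]
          ring_nf
  have h := congrArg Complex.re key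
  simp only [Complex.ofReal_re, Complex.re_sum, Complex.exp_ofReal_mul_I_re] at h
  exact h

lemma negInv {d : ℕ} : Function.Involutive (fun σ : Fin d → Bool => fun h => !(σ h)) := by
  intro σ; funext h; simp

lemma sum_all_eq_two_mul {n : ℕ} (F : (Fin (n+1) → Bool) → ℝ)
    (hF : ∀ σ, F (fun h => !(σ h)) = F σ) :
    ∑ σ : Fin (n+1) → Bool, F σ = 2 * ∑ σ ∈ signSet (n+1), F σ := by
  have hsign : signSet (n+1) = Finset.univ.filter (fun σ => σ 0 = true) := by
    unfold signSet
    apply Finset.filter_congr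
    intro σ _
    constructor
    · intro h; exact h 0 rfl
    · intro h h' hh'
      have : h' = 0 := Fin.ext hh'
      rw [this]; exact h
  rw [hsign,
    ← Finset.sum_filter_add_sum_filter_not Finset.univ (fun σ => σ 0 = true) F]
  have h2 : ∑ σ ∈ Finset.univ.filter (fun σ : Fin (n+1) → Bool => ¬ σ 0 = true), F σ
      = ∑ σ ∈ Finset.univ.filter (fun σ : Fin (n+1) → Bool => σ 0 = true), F σ := by
    refine Finset.sum_nbij' (i := fun σ => fun h => !(σ h)) (j := fun σ => fun h => !(σ h))
      ?_ ?_ ?_ ?_ ?_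
    · intro σ hσ
      simp only [Finset.mem_filter, Finset.mem_univ, true_and] at hσ ⊢
      simp [Bool.not_eq_true] at hσ
      simp [hσ]
    · intro σ hσ
      simp only [Finset.mem_filter, Finset.mem_univ, true_and] at hσ ⊢
      simp [hσ]
    · intro σ _; funext h; simp
    · intro σ _; funext h; simp
    · intro σ _; exact (hF σ).symm
  rw [h2]; ring

lemma prod_cos {d : ℕ} (θ : Fin d → ℝ) :
    ∏ h, Real.cos (θ h) =
      ((2:ℝ) ^ (d-1))⁻¹ * ∑ σ ∈ signSet d, Real.cos (∑ h, sgn σ h * θ h) := by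
  cases d with
  | zero =>
      simp [signSet, Finset.filter_true_of_mem]
  | succ n =>
      have h1 := prod_cos_full θ
      have h2 := sum_all_eq_two_mul (fun σ => Real.cos (∑ h, sgn σ h * θ h))
        (by
          intro σ
          have : (∑ h, sgn (fun h => !(σ h)) h * θ h) = -∑ h, sgn σ h * θ h := by
            rw [← Finset.sum_neg_distrib]
            refine Finset.sum_congr rfl fun h _ => ?_
            cases hσ : σ h <;> simp [sgn, hσ]
          simp [this])
      rw [h2] at h1
      have hp : (0:ℝ) < 2 ^ n := by positivity
      have : (2:ℝ) ^ (n+1) = 2 * 2 ^ n := by ring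
      rw [this, mul_assoc] at h1
      have h3 : (2:ℝ) ^ n * ∏ h, Real.cos (θ h) = ∑ σ ∈ signSet (n+1), Real.cos (∑ h, sgn σ h * θ h) := by
        have := mul_left_cancel₀ (two_ne_zero (α := ℝ)) h1
        exact this
      have : Nat.succ n - 1 = n := rfl
      rw [this, ← h3]
      field_simp

lemma integrable_mul_cos {d : ℕ} (f : (Fin d → ℝ) → ℝ) (hf : Integrable f)
    (ψ : (Fin d → ℝ) → ℝ) (hψ : Continuous ψ) :
    Integrable (fun x => f x * Real.cos (ψ x)) := by
  have h0 := Integrable.bdd_mul (f := fun x => Real.cos (ψ x)) (c := 1) hf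
    ((Real.continuous_cos.comp hψ).aestronglyMeasurable)
    (Filter.Eventually.of_forall fun x => by simpa [Real.norm_eq_abs] using Real.abs_cos_le_one (ψ x))
  simpa [mul_comm] using h0

lemma integrable_mul_cexp {d : ℕ} (f : (Fin d → ℝ) → ℝ) (hf : Integrable f)
    (ψ : (Fin d → ℝ) → ℝ) (hψ : Continuous ψ) :
    Integrable (fun x => (f x : ℂ) * Complex.exp (Complex.I * (ψ x : ℂ))) := by
  have h0 := Integrable.bdd_mul (f := fun x => Complex.exp (Complex.I * (ψ x : ℂ))) (c := 1)
    hf.ofReal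
    ((Complex.continuous_exp.comp (by fun_prop)).aestronglyMeasurable)
    (Filter.Eventually.of_forall fun x => by
      rw [Complex.norm_exp]
      simp)
  simpa [mul_comm] using h0

lemma integral_cos_term {d : ℕ} (f : (Fin d → ℝ) → ℝ) (hf : Integrable f)
    (L : Fin d → ℝ) (hL : ∀ h, 0 < L h) (k : Fin d → ℕ) (σ : Fin d → Bool) :
    ∫ x : Fin d → ℝ,
        f x * Real.cos (∑ h, sgn σ h * ((k h : ℝ) * Real.pi * (x h + L h) / (2 * L h))) =
      (fourierT f (fun h => Real.pi * (sgn σ h * (k h : ℝ)) / (2 * L h)) *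
        Complex.exp (Complex.I * ((Real.pi : ℂ) / 2) *
          ((∑ h, sgn σ h * (k h : ℝ) : ℝ) : ℂ))).re := by
  set u : Fin d → ℝ := fun h => Real.pi * (sgn σ h * (k h : ℝ)) / (2 * L h) with hu
  set c : ℝ := Real.pi / 2 * ∑ h, sgn σ h * (k h : ℝ) with hc
  have hpt : ∀ x : Fin d → ℝ,
      (∑ h, sgn σ h * ((k h : ℝ) * Real.pi * (x h + L h) / (2 * L h)))
        = (∑ h, u h * x h) + c := by
    intro x
    rw [hc, Finset.mul_sum, ← Finset.sum_add_distrib]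
    refine Finset.sum_congr rfl fun h _ => ?_
    have hne := (hL h).ne'
    rw [hu]
    field_simp
  have hA : Continuous fun x : Fin d → ℝ => ∑ h, u h * x h := by fun_prop
  have hIc : Integrable (fun x : Fin d → ℝ =>
      (f x : ℂ) * Complex.exp (Complex.I * ((((∑ h, u h * x h) + c : ℝ)) : ℂ))) :=
    integrable_mul_cexp f hf _ (by fun_prop)
  -- rewrite the RHS
  have hrhs : (fourierT f u *
      Complex.exp (Complex.I * ((Real.pi : ℂ) / 2) * ((∑ h, sgn σ h * (k h : ℝ) : ℝ) : ℂ))) =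
      ∫ x : Fin d → ℝ, (f x : ℂ) * Complex.exp (Complex.I * ((((∑ h, u h * x h) + c : ℝ)) : ℂ)) := by
    rw [fourierT, ← integral_mul_const]
    refine integral_congr_ae (Filter.Eventually.of_forall fun x => ?_)
    beta_reduce
    rw [mul_assoc, ← Complex.exp_add]
    congr 1
    have e1 : (∑ h, (u h : ℂ) * (x h : ℂ)) = ((∑ h, u h * x h : ℝ) : ℂ) := by
      push_cast; ring
    have e2 : Complex.I * ((Real.pi : ℂ) / 2) * ((∑ h, sgn σ h * (k h : ℝ) : ℝ) : ℂ)
        = Complex.I * (c : ℂ) := by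
      rw [hc]; push_cast; ring
    rw [e1, e2, ← mul_add, ← Complex.ofReal_add]
  have hre : (∫ x : Fin d → ℝ,
      (f x : ℂ) * Complex.exp (Complex.I * ((((∑ h, u h * x h) + c : ℝ)) : ℂ))).re
      = ∫ x : Fin d → ℝ,
        ((f x : ℂ) * Complex.exp (Complex.I * ((((∑ h, u h * x h) + c : ℝ)) : ℂ))).re :=
    (integral_re hIc).symm
  rw [hrhs, hre]
  simp_rw [hpt]
  refine integral_congr_ae (Filter.Eventually.of_forall fun x => ?_)
  beta_reduce
  rw [mul_comm Complex.I, Complex.re_ofReal_mul, Complex.exp_ofReal_mul_I_re]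

/-- Key identity of the COS method: the (untruncated) cosine coefficients of `f`
are given by evaluations of its Fourier transform. -/
theorem cos_coef_from_fourier
    {d : ℕ} (f : (Fin d → ℝ) → ℝ) (hf : Integrable f)
    (L : Fin d → ℝ) (hL : ∀ h, 0 < L h) (k : Fin d → ℕ) :
    (∏ h, L h)⁻¹ * (∫ x : Fin d → ℝ, f x * cosBasis L k x) =
      cosCoef (fourierT f) L k := by
  have hpt : ∀ x : Fin d → ℝ, f x * cosBasis L k x
      = ((2:ℝ) ^ (d-1))⁻¹ * ∑ σ ∈ signSet d,
          f x * Real.cos (∑ h, sgn σ h * ((k h : ℝ) * Real.pi * (x h + L h) / (2 * L h))) := by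
    intro x
    simp only [cosBasis]
    rw [prod_cos (θ := fun h => (k h : ℝ) * Real.pi * (x h + L h) / (2 * L h)),
      mul_left_comm, Finset.mul_sum]
  have hint : ∀ σ ∈ signSet d, Integrable (fun x : Fin d → ℝ =>
      f x * Real.cos (∑ h, sgn σ h * ((k h : ℝ) * Real.pi * (x h + L h) / (2 * L h)))) :=
    fun σ _ => integrable_mul_cos f hf _ (by fun_prop)
  have hI : (∫ x : Fin d → ℝ, f x * cosBasis L k x)
      = ((2:ℝ) ^ (d-1))⁻¹ * ∑ σ ∈ signSet d, ∫ x : Fin d → ℝ,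
          f x * Real.cos (∑ h, sgn σ h * ((k h : ℝ) * Real.pi * (x h + L h) / (2 * L h))) := by
    rw [show (∫ x : Fin d → ℝ, f x * cosBasis L k x)
        = ∫ x : Fin d → ℝ, ((2:ℝ) ^ (d-1))⁻¹ * ∑ σ ∈ signSet d,
            f x * Real.cos (∑ h, sgn σ h * ((k h : ℝ) * Real.pi * (x h + L h) / (2 * L h)))
      from integral_congr_ae (Filter.Eventually.of_forall hpt)]
    rw [integral_const_mul, integral_finset_sum _ hint]
  rw [hI, cosCoef, ← Finset.sum_congr rfl fun σ _ => integral_cos_term f hf L hL k σ,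
    mul_inv]
  ring
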